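/- Let H be a real Hilbert space, T : H → H a nonexpansive mapping with Fix T ≠ ∅, and (β_n), (λ_n) ⊂ (0,1] real sequences satisfying: (i) lim β_n = 1, (ii) Σ_{n≥0} (1−β_n) = ∞, (iii) Σ_{n≥1} |β_n − β_{n−1}| < ∞, (iv) liminf λ_n > 0, (v) Σ_{n≥1} |λ_n − λ_{n−1}| < ∞. Then for any starting point x₀ ∈ H, the sequence (x_n) generated by the (T-KM) iteration converges strongly to the metric projection of 0 onto Fix T. -/

import Mathlib

set_option maxHeartbeats 1000000

open Filter Finset

local notation "⟪" x ", " y "⟫" => @inner ℝ _ _ x y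

section FromAux


/-- Product of factors in (0,1] bounded by exp of minus sum. -/
lemma tkm_prod_tendsto_zero (β : ℕ → ℝ) (hβ : ∀ n, 0 < β n ∧ β n ≤ 1)
    (hdiv : Tendsto (fun n => ∑ i ∈ Finset.range n, (1 - β i)) atTop atTop) (m : ℕ) :
    Tendsto (fun n => ∏ i ∈ Finset.Ico m n, β i) atTop (nhds 0) := by
  have hle : ∀ n, (∏ i ∈ Finset.Ico m n, β i) ≤ Real.exp (-(∑ i ∈ Finset.Ico m n, (1 - β i))) := by
    intro n
    have : (∏ i ∈ Finset.Ico m n, β i) ≤ ∏ i ∈ Finset.Ico m n, Real.exp (-(1 - β i)) := by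
      apply Finset.prod_le_prod
      · intro i _; exact (hβ i).1.le
      · intro i _
        have := Real.add_one_le_exp (β i - 1)
        have h2 : -(1 - β i) = β i - 1 := by ring
        rw [h2]; linarith
    calc (∏ i ∈ Finset.Ico m n, β i) ≤ ∏ i ∈ Finset.Ico m n, Real.exp (-(1 - β i)) := this
      _ = Real.exp (∑ i ∈ Finset.Ico m n, -(1 - β i)) := by rw [Real.exp_sum]
      _ = Real.exp (-(∑ i ∈ Finset.Ico m n, (1 - β i))) := by rw [Finset.sum_neg_distrib]
  have hge : ∀ n, 0 ≤ ∏ i ∈ Finset.Ico m n, β i := by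
    intro n; exact Finset.prod_nonneg fun i _ => (hβ i).1.le
  have hsum : Tendsto (fun n => ∑ i ∈ Finset.Ico m n, (1 - β i)) atTop atTop := by
    have h1 : ∀ᶠ n in atTop, ∑ i ∈ Finset.Ico m n, (1 - β i)
        = (∑ i ∈ Finset.range n, (1 - β i)) - ∑ i ∈ Finset.range m, (1 - β i) := by
      filter_upwards [eventually_ge_atTop m] with n hn
      rw [Finset.sum_Ico_eq_sub _ hn]
    have h2 := tendsto_atTop_add_const_right atTop (-(∑ i ∈ Finset.range m, (1 - β i))) hdiv
    exact h2.congr' (h1.mono fun n hn => by rw [← sub_eq_add_neg, ← hn])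
  have hexp : Tendsto (fun n => Real.exp (-(∑ i ∈ Finset.Ico m n, (1 - β i)))) atTop (nhds 0) :=
    Real.tendsto_exp_atBot.comp (tendsto_neg_atBot_iff.mpr hsum)
  exact squeeze_zero hge hle hexp

/-- Recursion unfolding. -/
lemma tkm_rec_bound (a β c : ℕ → ℝ) (hβ : ∀ n, 0 < β n ∧ β n ≤ 1) (hc : ∀ n, 0 ≤ c n)
    (h : ∀ n, a (n + 1) ≤ β n * a n + c n) (m : ℕ) :
    ∀ n, m ≤ n → a n ≤ (∏ i ∈ Finset.Ico m n, β i) * a m + ∑ i ∈ Finset.Ico m n, c i := by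
  intro n hn
  induction n with
  | zero => simp [Nat.le_zero.mp hn]
  | succ n ih =>
    rcases Nat.lt_or_ge m (n+1) with hlt | hge
    · have hmn : m ≤ n := Nat.lt_succ_iff.mp hlt
      have ihn := ih hmn
      have hP : 0 ≤ ∏ i ∈ Finset.Ico m n, β i := Finset.prod_nonneg fun i _ => (hβ i).1.le
      calc a (n+1) ≤ β n * a n + c n := h n
        _ ≤ β n * ((∏ i ∈ Finset.Ico m n, β i) * a m + ∑ i ∈ Finset.Ico m n, c i) + c n := by
            nlinarith [(hβ n).1, ihn]
        _ ≤ (∏ i ∈ Finset.Ico m (n+1), β i) * a m + ∑ i ∈ Finset.Ico m (n+1), c i := by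
            rw [Finset.prod_Ico_succ_top hmn, Finset.sum_Ico_succ_top hmn]
            have hS : 0 ≤ ∑ i ∈ Finset.Ico m n, c i := Finset.sum_nonneg fun i _ => hc i
            nlinarith [(hβ n).1, (hβ n).2]
    · have : m = n + 1 := le_antisymm hn hge
      simp [this]

/-- Xu's lemma, summable-error version. -/
lemma tkm_xu_summable (a β c : ℕ → ℝ) (hβ : ∀ n, 0 < β n ∧ β n ≤ 1)
    (ha : ∀ n, 0 ≤ a n) (hc : ∀ n, 0 ≤ c n) (hcs : Summable c)
    (hdiv : Tendsto (fun n => ∑ i ∈ Finset.range n, (1 - β i)) atTop atTop)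
    (h : ∀ n, a (n + 1) ≤ β n * a n + c n) :
    Tendsto a atTop (nhds 0) := by
  rw [Metric.tendsto_atTop]
  intro ε hε
  obtain ⟨S, hS⟩ := id hcs
  have hparts := hS.tendsto_sum_nat
  -- choose m with S - partial m < ε/3
  have hm : ∀ᶠ m in atTop, S - ∑ i ∈ Finset.range m, c i < ε/3 := by
    have : Tendsto (fun m => S - ∑ i ∈ Finset.range m, c i) atTop (nhds (S - S)) :=
      tendsto_const_nhds.sub hparts
    rw [sub_self] at this
    exact (this.eventually (eventually_lt_nhds (by linarith : (0:ℝ) < ε/3)))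
  obtain ⟨m, hm⟩ := hm.exists
  have htail : ∀ n, m ≤ n → ∑ i ∈ Finset.Ico m n, c i < ε/3 := by
    intro n hn
    rw [Finset.sum_Ico_eq_sub _ hn]
    have h1 : ∑ i ∈ Finset.range n, c i ≤ S := by
      exact Summable.sum_le_tsum _ (fun i _ => hc i) hcs |>.trans_eq (hS.tsum_eq)
    linarith
  have hprod := tkm_prod_tendsto_zero β hβ hdiv m
  have hp2 : ∀ᶠ n in atTop, (∏ i ∈ Finset.Ico m n, β i) * a m < ε/3 := by
    rcases eq_or_lt_of_le (ha m) with h0 | h0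
    · filter_upwards with n; rw [← h0]; simpa using (by linarith : (0:ℝ) < ε/3)
    · have := hprod.eventually (eventually_lt_nhds (div_pos (by linarith : (0:ℝ) < ε/3) h0))
      filter_upwards [this] with n hn
      have hP : 0 ≤ ∏ i ∈ Finset.Ico m n, β i := Finset.prod_nonneg fun i _ => (hβ i).1.le
      calc (∏ i ∈ Finset.Ico m n, β i) * a m < (ε/3 / a m) * a m := by
            exact mul_lt_mul_of_pos_right hn h0
        _ = ε/3 := div_mul_cancel₀ _ (ne_of_gt h0)
  obtain ⟨N, hN⟩ := (hp2.and (eventually_ge_atTop m)).exists_forall_of_atTop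
  refine ⟨N, fun n hn => ?_⟩
  have hrec := tkm_rec_bound a β c hβ hc h m n (le_trans (hN N le_rfl).2 hn)
  have := htail n (le_trans (hN N le_rfl).2 hn)
  have h2 := (hN n hn).1
  rw [Real.dist_eq, sub_zero, abs_of_nonneg (ha n)]
  linarith

/-- Xu's lemma, limsup version. -/
lemma tkm_xu_limsup (s β δ : ℕ → ℝ) (hβ : ∀ n, 0 < β n ∧ β n ≤ 1)
    (hs : ∀ n, 0 ≤ s n)
    (hδ : ∀ ε : ℝ, 0 < ε → ∀ᶠ n in atTop, δ n ≤ ε)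
    (hdiv : Tendsto (fun n => ∑ i ∈ Finset.range n, (1 - β i)) atTop atTop)
    (h : ∀ n, s (n + 1) ≤ β n * s n + (1 - β n) * δ n) :
    Tendsto s atTop (nhds 0) := by
  rw [Metric.tendsto_atTop]
  intro ε hε
  obtain ⟨N₀, hN₀⟩ := (hδ (ε/3) (by linarith)).exists_forall_of_atTop
  -- for n ≥ N₀ : s n ≤ prod * s N₀ + ε/3
  have key : ∀ n, N₀ ≤ n → s n ≤ (∏ i ∈ Finset.Ico N₀ n, β i) * s N₀ + ε/3 := by
    intro n hn
    induction n with
    | zero => simp [Nat.le_zero.mp hn]; linarith [hs 0]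
    | succ n ih =>
      rcases Nat.lt_or_ge N₀ (n+1) with hlt | hge
      · have hmn : N₀ ≤ n := Nat.lt_succ_iff.mp hlt
        have ihn := ih hmn
        have hP : 0 ≤ ∏ i ∈ Finset.Ico N₀ n, β i := Finset.prod_nonneg fun i _ => (hβ i).1.le
        have hδn := hN₀ n hmn
        calc s (n+1) ≤ β n * s n + (1 - β n) * δ n := h n
          _ ≤ β n * ((∏ i ∈ Finset.Ico N₀ n, β i) * s N₀ + ε/3) + (1 - β n) * (ε/3) := by
              nlinarith [(hβ n).1, (hβ n).2]
          _ = (∏ i ∈ Finset.Ico N₀ (n+1), β i) * s N₀ + ε/3 := by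
              rw [Finset.prod_Ico_succ_top hmn]; ring
      · have : N₀ = n + 1 := le_antisymm hn hge
        simp [this]; linarith [hs (n+1)]
  have hprod := tkm_prod_tendsto_zero β hβ hdiv N₀
  have hp2 : ∀ᶠ n in atTop, (∏ i ∈ Finset.Ico N₀ n, β i) * s N₀ < ε/3 := by
    rcases eq_or_lt_of_le (hs N₀) with h0 | h0
    · filter_upwards with n; rw [← h0]; simpa using (by linarith : (0:ℝ) < ε/3)
    · have := hprod.eventually (eventually_lt_nhds (div_pos (by linarith : (0:ℝ) < ε/3) h0))
      filter_upwards [this] with n hn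
      calc (∏ i ∈ Finset.Ico N₀ n, β i) * s N₀ < (ε/3 / s N₀) * s N₀ :=
            mul_lt_mul_of_pos_right hn h0
        _ = ε/3 := div_mul_cancel₀ _ (ne_of_gt h0)
  obtain ⟨N, hN⟩ := (hp2.and (eventually_ge_atTop N₀)).exists_forall_of_atTop
  refine ⟨N, fun n hn => ?_⟩
  have h1 := key n (le_trans (hN N le_rfl).2 hn)
  have h2 := (hN n hn).1
  rw [Real.dist_eq, sub_zero, abs_of_nonneg (hs n)]
  linarith



/-- Monotonicity of `I - T` for nonexpansive `T`. -/
lemma tkm_mono {H : Type*} [NormedAddCommGroup H] [InnerProductSpace ℝ H]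
    (T : H → H) (hT : ∀ a b : H, ‖T a - T b‖ ≤ ‖a - b‖) (a b : H) :
    0 ≤ ⟪a - T a - (b - T b), a - b⟫ := by
  have h1 : ⟪a - T a - (b - T b), a - b⟫ = ⟪a - b, a - b⟫ - ⟪T a - T b, a - b⟫ := by
    rw [← inner_sub_left]; congr 1; abel
  have h2 : ⟪T a - T b, a - b⟫ ≤ ‖T a - T b‖ * ‖a - b‖ := real_inner_le_norm _ _
  have h3 : ‖T a - T b‖ * ‖a - b‖ ≤ ‖a - b‖ * ‖a - b‖ :=
    mul_le_mul_of_nonneg_right (hT a b) (norm_nonneg _)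
  have h4 : ⟪a - b, a - b⟫ = ‖a - b‖ * ‖a - b‖ := real_inner_self_eq_norm_mul_norm _
  linarith

/-- Existence and strong convergence of the Browder regularization curve. -/
lemma tkm_browder {H : Type*} [NormedAddCommGroup H] [InnerProductSpace ℝ H] [CompleteSpace H]
    (T : H → H) (hT : ∀ a b : H, ‖T a - T b‖ ≤ ‖a - b‖) (p₀ : H) (hp₀ : T p₀ = p₀) :
    ∃ q : H, T q = q ∧ (∀ y : H, T y = y → ‖q‖ ≤ ‖y‖) ∧
      ∃ z : ℕ → H, (∀ k, z k = (1 - 1/((k:ℝ)+2)) • T (z k)) ∧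
        (∀ k, ∀ p : H, T p = p → ‖z k‖ ≤ ‖p‖) ∧ Tendsto z atTop (nhds q) := by
  haveI : Nonempty H := ⟨p₀⟩
  set t : ℕ → ℝ := fun k => 1 - 1/((k:ℝ)+2) with ht
  have ht0 : ∀ k, 0 < t k := by
    intro k
    have h2 : (0:ℝ) < (k:ℝ) + 2 := by positivity
    have : 1/((k:ℝ)+2) ≤ 1/2 := by
      apply div_le_div_of_nonneg_left (by norm_num) (by norm_num)
      have : (0:ℝ) ≤ (k:ℝ) := Nat.cast_nonneg k
      linarith
    simp only [ht]; linarith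
  have ht1 : ∀ k, t k < 1 := by
    intro k
    have h2 : (0:ℝ) < (k:ℝ) + 2 := by positivity
    simp only [ht]
    have : 0 < 1/((k:ℝ)+2) := by positivity
    linarith
  have htlim : Tendsto t atTop (nhds 1) := by
    have h1 : Tendsto (fun k : ℕ => ((k:ℝ)+2)) atTop atTop :=
      tendsto_atTop_add_const_right atTop 2 tendsto_natCast_atTop_atTop
    have h2 : Tendsto (fun k : ℕ => 1/((k:ℝ)+2)) atTop (nhds 0) := by
      simp only [one_div]; exact h1.inv_tendsto_atTop
    have h3 : Tendsto (fun k : ℕ => 1 - 1/((k:ℝ)+2)) atTop (nhds (1 - 0)) :=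
      (tendsto_const_nhds (x := (1:ℝ))).sub h2
    simpa [ht, one_div] using h3
  -- contraction fixed points
  have hlip : ∀ k, LipschitzWith (Real.toNNReal (t k)) (fun v : H => t k • T v) := by
    intro k
    apply LipschitzWith.of_dist_le_mul
    intro a b
    simp only [dist_eq_norm]
    rw [← smul_sub, norm_smul, Real.norm_eq_abs, abs_of_pos (ht0 k),
      Real.coe_toNNReal _ (ht0 k).le]
    exact mul_le_mul_of_nonneg_left (hT a b) (ht0 k).le
  have hcon : ∀ k, ContractingWith (Real.toNNReal (t k)) (fun v : H => t k • T v) :=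
    fun k => ⟨by rw [← Real.toNNReal_one]; exact (Real.toNNReal_lt_toNNReal_iff_of_nonneg (ht0 k).le).mpr (ht1 k), hlip k⟩
  set z : ℕ → H := fun k => ContractingWith.fixedPoint _ (hcon k) with hzdef
  have hz : ∀ k, z k = t k • T (z k) := fun k => ((hcon k).fixedPoint_isFixedPt).symm
  have hTz : ∀ k, z k - T (z k) = (1 - (t k)⁻¹) • z k := by
    intro k
    have h2 : (t k)⁻¹ • z k = T (z k) := by
      conv_lhs => rw [hz k]
      rw [smul_smul, inv_mul_cancel₀ (ht0 k).ne', one_smul]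
    rw [← h2, sub_smul, one_smul]
  have htinv : ∀ k, 1 < (t k)⁻¹ := fun k => (one_lt_inv₀ (ht0 k)).mpr (ht1 k)
  -- minimal norm bound
  have hinner : ∀ k (p : H), T p = p → ‖z k‖ ^ 2 ≤ ⟪z k, p⟫ := by
    intro k p hp
    have hm := tkm_mono T hT (z k) p
    rw [hp, sub_self, sub_zero, hTz k, real_inner_smul_left, inner_sub_right,
      real_inner_self_eq_norm_sq] at hm
    nlinarith [htinv k]
  have hnormle : ∀ k (p : H), T p = p → ‖z k‖ ≤ ‖p‖ := by
    intro k p hp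
    nlinarith [hinner k p hp, real_inner_le_norm (z k) p, norm_nonneg (z k), norm_nonneg p]
  -- monotonicity along the curve
  have hCkey : ∀ k l, k < l → ‖z k‖ ^ 2 ≤ ⟪z k, z l⟫ := by
    intro k l hkl
    have htkl : (t l)⁻¹ < (t k)⁻¹ := by
      apply inv_strictAnti₀ (ht0 k)
      have h1 : ((k:ℝ)+2) < ((l:ℝ)+2) := by
        have : (k:ℝ) < (l:ℝ) := Nat.cast_lt.mpr hkl
        linarith
      have h2 : 1/((l:ℝ)+2) < 1/((k:ℝ)+2) :=
        one_div_lt_one_div_of_lt (by positivity) h1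
      simp only [ht]; linarith
    have hm := tkm_mono T hT (z l) (z k)
    rw [hTz l, hTz k, inner_sub_left, real_inner_smul_left, real_inner_smul_left] at hm
    have hzl : ⟪z l, z l - z k⟫ = ⟪z k, z l - z k⟫ + ⟪z l - z k, z l - z k⟫ := by
      rw [← inner_add_left]
      congr 1
      abel
    have hdd : (0:ℝ) ≤ ⟪z l - z k, z l - z k⟫ := real_inner_self_nonneg
    have hB : (0:ℝ) ≤ ⟪z k, z l - z k⟫ := by nlinarith [htinv l, htinv k]
    have : ⟪z k, z l⟫ = ⟪z k, z k⟫ + ⟪z k, z l - z k⟫ := by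
      rw [← inner_add_right]; congr 1; abel
    rw [this, real_inner_self_eq_norm_sq]
    linarith
  have hinner2 : ∀ k l, k ≤ l → ‖z k‖ ^ 2 ≤ ⟪z k, z l⟫ := by
    intro k l hkl
    rcases eq_or_lt_of_le hkl with rfl | h
    · rw [real_inner_self_eq_norm_sq]
    · exact hCkey k l h
  have hgmono : ∀ k l, k ≤ l → ‖z k‖ ≤ ‖z l‖ := by
    intro k l hkl
    nlinarith [hinner2 k l hkl, real_inner_le_norm (z k) (z l), norm_nonneg (z k),
      norm_nonneg (z l)]
  have hdiff : ∀ k l, k ≤ l → ‖z l - z k‖ ^ 2 ≤ ‖z l‖ ^ 2 - ‖z k‖ ^ 2 := by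
    intro k l hkl
    have h1 := hinner2 k l hkl
    have h2 : ‖z l - z k‖ ^ 2 = ‖z l‖ ^ 2 - 2 * ⟪z l, z k⟫ + ‖z k‖ ^ 2 :=
      norm_sub_sq_real _ _
    have h3 : ⟪z l, z k⟫ = ⟪z k, z l⟫ := real_inner_comm _ _
    linarith
  -- the sequence of squared norms converges
  have hbdd : BddAbove (Set.range fun k => ‖z k‖ ^ 2) := by
    refine ⟨‖p₀‖ ^ 2, ?_⟩
    rintro v ⟨k, rfl⟩
    show ‖z k‖ ^ 2 ≤ ‖p₀‖ ^ 2
    have := hnormle k p₀ hp₀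
    nlinarith [norm_nonneg (z k)]
  have hgm : Monotone fun k => ‖z k‖ ^ 2 := by
    intro k l hkl
    show ‖z k‖ ^ 2 ≤ ‖z l‖ ^ 2
    have := hgmono k l hkl
    nlinarith [norm_nonneg (z k)]
  have hgtend := tendsto_atTop_ciSup hgm hbdd
  set L := ⨆ k, ‖z k‖ ^ 2 with hL
  have hgleL : ∀ k, ‖z k‖ ^ 2 ≤ L := fun k => le_ciSup hbdd k
  -- Cauchy
  have hcauchy : CauchySeq z := by
    rw [Metric.cauchySeq_iff']
    intro ε hε
    have : ∀ᶠ k in atTop, L - ε ^ 2 < ‖z k‖ ^ 2 := by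
      apply hgtend.eventually
      exact eventually_gt_nhds (by nlinarith)
    obtain ⟨N, hN⟩ := this.exists
    refine ⟨N, fun n hn => ?_⟩
    have h1 := hdiff N n hn
    have h2 := hgleL n
    have h3 : ‖z n - z N‖ ^ 2 < ε ^ 2 := by linarith
    rw [dist_eq_norm]
    exact lt_of_pow_lt_pow_left₀ 2 hε.le h3
  obtain ⟨q, hq⟩ := cauchySeq_tendsto_of_complete hcauchy
  have hTc : Continuous T := by
    have : LipschitzWith 1 T := by
      apply LipschitzWith.of_dist_le_mul
      intro a b
      simp only [dist_eq_norm, NNReal.coe_one, one_mul]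
      exact hT a b
    exact this.continuous
  have hfix : T q = q := by
    have h1 : Tendsto (fun k => t k • T (z k)) atTop (nhds ((1:ℝ) • T q)) :=
      htlim.smul ((hTc.tendsto q).comp hq)
    have h2 : Tendsto (fun k => t k • T (z k)) atTop (nhds q) := by
      apply hq.congr
      intro k
      exact hz k
    have := tendsto_nhds_unique h1 h2
    rw [one_smul] at this
    exact this
  refine ⟨q, hfix, ?_, z, hz, fun k p hp => hnormle k p hp, hq⟩
  intro y hy
  exact le_of_tendsto (hq.norm) (Filter.Eventually.of_forall fun k => hnormle k y hy)
end FromAux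

/-- Theorem 3 of Boţ–Csetnek–Meier. Strong convergence of the
Tikhonov-regularized Krasnosel'skiĭ–Mann iteration
`x_{n+1} = β_n x_n + λ_n (T(β_n x_n) − β_n x_n)` to the metric projection of `0`
onto `Fix T` (characterized as the unique fixed point of minimal norm). -/
theorem tkm_strong_convergence
    {H : Type*} [NormedAddCommGroup H] [InnerProductSpace ℝ H] [CompleteSpace H]
    (T : H → H) (hT : ∀ a b : H, ‖T a - T b‖ ≤ ‖a - b‖)
    (hFix : ∃ p : H, T p = p)
    (β lam : ℕ → ℝ)
    (hβ : ∀ n, β n ∈ Set.Ioc (0 : ℝ) 1)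
    (hlam : ∀ n, lam n ∈ Set.Ioc (0 : ℝ) 1)
    (hβ1 : Filter.Tendsto β Filter.atTop (nhds 1))
    (hβdiv : Filter.Tendsto (fun n => ∑ i ∈ Finset.range n, (1 - β i))
      Filter.atTop Filter.atTop)
    (hβsum : Summable (fun n => |β (n + 1) - β n|))
    (hlaminf : 0 < Filter.liminf lam Filter.atTop)
    (hlamsum : Summable (fun n => |lam (n + 1) - lam n|))
    (x : ℕ → H)
    (hx : ∀ n, x (n + 1) = β n • x n + lam n • (T (β n • x n) - β n • x n)) :
    ∃ q : H, T q = q ∧ (∀ y : H, T y = y → ‖q‖ ≤ ‖y‖) ∧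
      Filter.Tendsto x Filter.atTop (nhds q) := by
  obtain ⟨p₀, hp₀⟩ := hFix
  obtain ⟨q, hqfix, hqmin, z, hz, hznorm, hzq⟩ := tkm_browder T hT p₀ hp₀
  set t : ℕ → ℝ := fun k => 1 - 1/((k:ℝ)+2) with ht
  have ht1k : ∀ k, 0 < 1 - t k := by
    intro k
    have : (0:ℝ) < 1/((k:ℝ)+2) := by positivity
    simp only [ht]; linarith
  -- the one-step operator is nonexpansive
  have hstep : ∀ (l : ℝ), 0 ≤ l → l ≤ 1 → ∀ u v : H,
      ‖(u + l • (T u - u)) - (v + l • (T v - v))‖ ≤ ‖u - v‖ := by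
    intro l hl0 hl1 u v
    have h1 : (u + l • (T u - u)) - (v + l • (T v - v))
        = (1 - l) • (u - v) + l • (T u - T v) := by module
    rw [h1]
    calc ‖(1 - l) • (u - v) + l • (T u - T v)‖
        ≤ ‖(1 - l) • (u - v)‖ + ‖l • (T u - T v)‖ := norm_add_le _ _
      _ = (1 - l) * ‖u - v‖ + l * ‖T u - T v‖ := by
          rw [norm_smul, norm_smul, Real.norm_eq_abs, Real.norm_eq_abs,
            abs_of_nonneg (by linarith), abs_of_nonneg hl0]
      _ ≤ ‖u - v‖ := by nlinarith [hT u v, norm_nonneg (T u - T v)]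
  have hxs : ∀ n (p : H), T p = p → ‖x (n+1) - p‖ ≤ ‖β n • x n - p‖ := by
    intro n p hp
    have h1 := hstep (lam n) (hlam n).1.le (hlam n).2 (β n • x n) p
    rw [hp, sub_self, smul_zero, add_zero] at h1
    rw [hx n]
    exact h1
  -- boundedness
  set R : ℝ := max ‖x 0 - p₀‖ ‖p₀‖ with hR
  have hxR : ∀ n, ‖x n - p₀‖ ≤ R := by
    intro n
    induction n with
    | zero => exact le_max_left _ _
    | succ n ih =>
      have h1 := hxs n p₀ hp₀
      have h2 : β n • x n - p₀ = β n • (x n - p₀) - (1 - β n) • p₀ := by module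
      have h3 : ‖β n • x n - p₀‖ ≤ β n * ‖x n - p₀‖ + (1 - β n) * ‖p₀‖ := by
        rw [h2]
        calc ‖β n • (x n - p₀) - (1 - β n) • p₀‖
            ≤ ‖β n • (x n - p₀)‖ + ‖(1 - β n) • p₀‖ := norm_sub_le _ _
          _ = β n * ‖x n - p₀‖ + (1 - β n) * ‖p₀‖ := by
              rw [norm_smul, norm_smul, Real.norm_eq_abs, Real.norm_eq_abs,
                abs_of_pos (hβ n).1, abs_of_nonneg (by linarith [(hβ n).2])]
      have h4 : ‖p₀‖ ≤ R := le_max_right _ _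
      nlinarith [(hβ n).1, (hβ n).2]
  set M : ℝ := R + ‖p₀‖ with hM
  have hM0 : 0 ≤ M := by
    have : (0:ℝ) ≤ R := le_trans (norm_nonneg _) (le_max_right ‖x 0 - p₀‖ ‖p₀‖)
    positivity
  have hxM : ∀ n, ‖x n‖ ≤ M := by
    intro n
    calc ‖x n‖ ≤ ‖x n - p₀‖ + ‖p₀‖ := by
          have := norm_add_le (x n - p₀) p₀; simpa using this
      _ ≤ M := by have := hxR n; rw [hM]; linarith
  have hyM : ∀ n, ‖β n • x n‖ ≤ M := by
    intro n
    rw [norm_smul, Real.norm_eq_abs, abs_of_pos (hβ n).1]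
    nlinarith [(hβ n).1, (hβ n).2, hxM n, norm_nonneg (x n)]
  have hp₀M : ‖p₀‖ ≤ M := by
    have : (0:ℝ) ≤ R := le_trans (norm_nonneg _) (le_max_right ‖x 0 - p₀‖ ‖p₀‖)
    rw [hM]; linarith
  have hzM : ∀ k, ‖z k‖ ≤ M := fun k => le_trans (hznorm k p₀ hp₀) hp₀M
  have hqM : ‖q‖ ≤ M := le_trans (hqmin p₀ hp₀) hp₀M
  set K : ℝ := 2 * (M + ‖p₀‖) with hK
  have hTyK : ∀ n, ‖T (β n • x n) - β n • x n‖ ≤ K := by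
    intro n
    calc ‖T (β n • x n) - β n • x n‖
        ≤ ‖T (β n • x n) - T p₀‖ + ‖T p₀ - β n • x n‖ := norm_sub_le_norm_sub_add_norm_sub _ _ _
      _ ≤ ‖β n • x n - p₀‖ + ‖p₀ - β n • x n‖ := by
          have hA : ‖T (β n • x n) - T p₀‖ ≤ ‖β n • x n - p₀‖ := hT _ _
          have hB : ‖T p₀ - β n • x n‖ = ‖p₀ - β n • x n‖ := by rw [hp₀]
          linarith
      _ = 2 * ‖β n • x n - p₀‖ := by rw [norm_sub_rev p₀]; ring
      _ ≤ K := by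
          have h1 : ‖β n • x n - p₀‖ ≤ ‖β n • x n‖ + ‖p₀‖ := norm_sub_le _ _
          have := hyM n
          rw [hK]; linarith
  -- asymptotic regularity
  set a : ℕ → ℝ := fun n => ‖x (n+1) - x n‖ with ha
  set c : ℕ → ℝ := fun n => M * |β (n+1) - β n| + K * |lam (n+1) - lam n| with hc
  have harec : ∀ n, a (n+1) ≤ β (n+1) * a n + c n := by
    intro n
    have hdec : x (n+2) - x (n+1) =
        ((β (n+1) • x (n+1) + lam (n+1) • (T (β (n+1) • x (n+1)) - β (n+1) • x (n+1)))
          - (β n • x n + lam (n+1) • (T (β n • x n) - β n • x n)))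
        + (lam (n+1) - lam n) • (T (β n • x n) - β n • x n) := by
      rw [hx (n+1), hx n]; module
    have h1 := hstep (lam (n+1)) (hlam (n+1)).1.le (hlam (n+1)).2 (β (n+1) • x (n+1)) (β n • x n)
    have h2 : β (n+1) • x (n+1) - β n • x n
        = β (n+1) • (x (n+1) - x n) + (β (n+1) - β n) • x n := by module
    have h3 : ‖β (n+1) • x (n+1) - β n • x n‖ ≤ β (n+1) * a n + |β (n+1) - β n| * M := by
      rw [h2]
      calc ‖β (n+1) • (x (n+1) - x n) + (β (n+1) - β n) • x n‖
          ≤ ‖β (n+1) • (x (n+1) - x n)‖ + ‖(β (n+1) - β n) • x n‖ := norm_add_le _ _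
        _ = β (n+1) * ‖x (n+1) - x n‖ + |β (n+1) - β n| * ‖x n‖ := by
            rw [norm_smul, norm_smul, Real.norm_eq_abs, Real.norm_eq_abs,
              abs_of_pos (hβ (n+1)).1]
        _ ≤ β (n+1) * a n + |β (n+1) - β n| * M :=
            add_le_add le_rfl (mul_le_mul_of_nonneg_left (hxM n) (abs_nonneg _))
    have h4 : ‖(lam (n+1) - lam n) • (T (β n • x n) - β n • x n)‖ ≤ |lam (n+1) - lam n| * K := by
      rw [norm_smul, Real.norm_eq_abs]
      exact mul_le_mul_of_nonneg_left (hTyK n) (abs_nonneg _)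
    calc a (n+1) = ‖x (n+2) - x (n+1)‖ := rfl
      _ ≤ ‖(β (n+1) • x (n+1) + lam (n+1) • (T (β (n+1) • x (n+1)) - β (n+1) • x (n+1)))
          - (β n • x n + lam (n+1) • (T (β n • x n) - β n • x n))‖
          + ‖(lam (n+1) - lam n) • (T (β n • x n) - β n • x n)‖ := by
            rw [hdec]; exact norm_add_le _ _
      _ ≤ ‖β (n+1) • x (n+1) - β n • x n‖ + |lam (n+1) - lam n| * K := add_le_add h1 h4
      _ ≤ β (n+1) * a n + (|β (n+1) - β n| * M + |lam (n+1) - lam n| * K) := by linarith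
      _ = β (n+1) * a n + c n := by rw [hc]; ring
  have hK0 : 0 ≤ K := by rw [hK]; positivity
  have hcs : Summable c := by
    rw [hc]
    exact ((hβsum.mul_left M).add (hlamsum.mul_left K))
  have hdiv' : Tendsto (fun n => ∑ i ∈ Finset.range n, (1 - β (i+1))) atTop atTop := by
    have h1 : Tendsto (fun n => ∑ i ∈ Finset.range (n+1), (1 - β i)) atTop atTop :=
      hβdiv.comp (tendsto_add_atTop_nat 1)
    have h2 := tendsto_atTop_add_const_right atTop (-(1 - β 0)) h1
    apply h2.congr
    intro n
    rw [Finset.sum_range_succ']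
    ring
  have ha0 : Tendsto a atTop (nhds 0) := by
    apply tkm_xu_summable a (fun n => β (n+1)) c (fun n => ⟨(hβ (n+1)).1, (hβ (n+1)).2⟩)
      (fun n => norm_nonneg _) (fun n => by positivity) hcs hdiv' harec
  -- ‖T x_n - x_n‖ → 0
  have hfy : ∀ n, lam n * ‖T (β n • x n) - β n • x n‖ = ‖x (n+1) - β n • x n‖ := by
    intro n
    have h1 : x (n+1) - β n • x n = lam n • (T (β n • x n) - β n • x n) := by
      rw [hx n]; abel
    rw [h1, norm_smul, Real.norm_eq_abs, abs_of_pos (hlam n).1]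
  have hxy : ∀ n, ‖x n - β n • x n‖ = (1 - β n) * ‖x n‖ := by
    intro n
    have h1 : x n - β n • x n = (1 - β n) • x n := by module
    rw [h1, norm_smul, Real.norm_eq_abs, abs_of_nonneg (by linarith [(hβ n).2])]
  have hbound : ∀ n, lam n * ‖T (β n • x n) - β n • x n‖ ≤ a n + (1 - β n) * M := by
    intro n
    rw [hfy n]
    calc ‖x (n+1) - β n • x n‖ ≤ ‖x (n+1) - x n‖ + ‖x n - β n • x n‖ :=
        norm_sub_le_norm_sub_add_norm_sub _ _ _
      _ ≤ a n + (1 - β n) * M := by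
          rw [hxy n]
          have := hxM n
          have h2 : (0:ℝ) ≤ 1 - β n := by linarith [(hβ n).2]
          nlinarith
  set L : ℝ := liminf lam atTop with hL
  have hlamlow : ∀ᶠ n in atTop, L/2 < lam n :=
    eventually_lt_of_lt_liminf (show L/2 < L by linarith)
      ⟨0, Filter.eventually_map.2 (Filter.Eventually.of_forall fun n => (hlam n).1.le)⟩
  have hL0 : 0 < L/2 := by rw [hL]; linarith
  have htyz : Tendsto (fun n => ‖T (β n • x n) - β n • x n‖) atTop (nhds 0) := by
    apply squeeze_zero' (Filter.Eventually.of_forall fun n => norm_nonneg _)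
      (g := fun n => (a n + (1 - β n) * M) / (L/2))
    · filter_upwards [hlamlow] with n hn
      have h1 := hbound n
      have h2 : 0 ≤ ‖T (β n • x n) - β n • x n‖ := norm_nonneg _
      rw [le_div_iff₀ hL0]
      calc ‖T (β n • x n) - β n • x n‖ * (L/2)
          = (L/2) * ‖T (β n • x n) - β n • x n‖ := mul_comm _ _
        _ ≤ lam n * ‖T (β n • x n) - β n • x n‖ :=
            mul_le_mul_of_nonneg_right hn.le h2
        _ ≤ a n + (1 - β n) * M := h1
    · have h1 : Tendsto (fun n => (1 - β n) * M) atTop (nhds 0) := by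
        have := (tendsto_const_nhds (x := (1:ℝ)).sub hβ1).mul_const M
        simpa using this
      have h2 : Tendsto (fun n => a n + (1 - β n) * M) atTop (nhds 0) := by
        have := ha0.add h1
        simpa using this
      have := h2.div_const (L/2)
      simpa using this
  have hεT : Tendsto (fun n => ‖T (x n) - x n‖) atTop (nhds 0) := by
    apply squeeze_zero' (Filter.Eventually.of_forall fun n => norm_nonneg _)
      (g := fun n => 2 * ((1 - β n) * M) + ‖T (β n • x n) - β n • x n‖)
    · apply Filter.Eventually.of_forall
      intro n
      have h1 : ‖T (x n) - x n‖ ≤ ‖T (x n) - T (β n • x n)‖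
          + ‖T (β n • x n) - β n • x n‖ + ‖β n • x n - x n‖ := by
        have := norm_add₃_le (a := T (x n) - T (β n • x n))
          (b := T (β n • x n) - β n • x n) (c := β n • x n - x n)
        simpa using this
      have h2 : ‖T (x n) - T (β n • x n)‖ ≤ (1 - β n) * ‖x n‖ := by
        have := hT (x n) (β n • x n)
        rw [hxy n] at this
        exact this
      have h3 : ‖β n • x n - x n‖ = (1 - β n) * ‖x n‖ := by
        rw [norm_sub_rev]; exact hxy n
      have h4 : (1 - β n) * ‖x n‖ ≤ (1 - β n) * M :=
        mul_le_mul_of_nonneg_left (hxM n) (by linarith [(hβ n).2])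
      linarith
    · have h1 : Tendsto (fun n => (1 - β n) * M) atTop (nhds 0) := by
        have := (tendsto_const_nhds (x := (1:ℝ)).sub hβ1).mul_const M
        simpa using this
      have := (h1.const_mul 2).add htyz
      simpa using this
  -- key inequality against the Browder curve
  have hkey : ∀ k n, (‖z k‖^2 - ⟪z k, x n⟫) * (1 - t k) ≤ 2*M*‖T (x n) - x n‖ := by
    intro k n
    have h1 : z k - x n = t k • (T (z k) - T (x n)) + t k • (T (x n) - x n)
        - (1 - t k) • x n := by
      conv_lhs => rw [hz k]
      module
    have h2 : ⟪z k - x n, z k - x n⟫ = t k * ⟪T (z k) - T (x n), z k - x n⟫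
        + t k * ⟪T (x n) - x n, z k - x n⟫ - (1 - t k) * ⟪x n, z k - x n⟫ := by
      nth_rewrite 1 [h1]
      simp only [inner_sub_left, inner_add_left, real_inner_smul_left]
      try ring
    have hb1 : ⟪T (z k) - T (x n), z k - x n⟫ ≤ ⟪z k - x n, z k - x n⟫ := by
      have e1 := real_inner_le_norm (T (z k) - T (x n)) (z k - x n)
      have e2 := hT (z k) (x n)
      have e3 : ⟪z k - x n, z k - x n⟫ = ‖z k - x n‖ * ‖z k - x n‖ :=
        real_inner_self_eq_norm_mul_norm _
      nlinarith [norm_nonneg (z k - x n)]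
    have hb2 : ⟪T (x n) - x n, z k - x n⟫ ≤ ‖T (x n) - x n‖ * (2*M) := by
      have e1 := real_inner_le_norm (T (x n) - x n) (z k - x n)
      have e2 : ‖z k - x n‖ ≤ 2*M := by
        have := norm_sub_le (z k) (x n)
        have := hzM k
        have := hxM n
        linarith [norm_sub_le (z k) (x n)]
      nlinarith [norm_nonneg (T (x n) - x n)]
    have hb3 : ⟪z k - x n, z k - x n⟫ + ⟪x n, z k - x n⟫ = ‖z k‖^2 - ⟪z k, x n⟫ := by
      rw [← inner_add_left]
      have e1 : z k - x n + x n = z k := by abel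
      rw [e1, inner_sub_right, real_inner_self_eq_norm_sq]
    have hD : (0:ℝ) ≤ ⟪z k - x n, z k - x n⟫ := real_inner_self_nonneg
    have ht0k : (0:ℝ) < t k := by
      have : 1/((k:ℝ)+2) ≤ 1/2 := by
        apply div_le_div_of_nonneg_left (by norm_num) (by norm_num)
        have : (0:ℝ) ≤ (k:ℝ) := Nat.cast_nonneg k
        linarith
      simp only [ht]; linarith
    have hεn : (0:ℝ) ≤ ‖T (x n) - x n‖ := norm_nonneg _
    have m1 : t k * ⟪T (z k) - T (x n), z k - x n⟫ ≤ t k * ⟪z k - x n, z k - x n⟫ :=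
      mul_le_mul_of_nonneg_left hb1 ht0k.le
    have m2 : t k * ⟪T (x n) - x n, z k - x n⟫ ≤ t k * (‖T (x n) - x n‖ * (2*M)) :=
      mul_le_mul_of_nonneg_left hb2 ht0k.le
    have m3 : t k * (‖T (x n) - x n‖ * (2*M)) ≤ ‖T (x n) - x n‖ * (2*M) := by
      have h4 : (0:ℝ) ≤ (1 - t k) * (‖T (x n) - x n‖ * (2*M)) :=
        mul_nonneg (ht1k k).le (by positivity)
      nlinarith
    rw [← hb3]
    linarith [h2, m1, m2, m3]
  -- limsup step
  have hG : ∀ ε : ℝ, 0 < ε → ∀ᶠ n in atTop, ‖q‖^2 - ⟪x n, q⟫ ≤ ε := by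
    intro ε hε
    have hzq0 : Tendsto (fun k => ‖z k - q‖) atTop (nhds 0) :=
      tendsto_iff_norm_sub_tendsto_zero.mp hzq
    have hk1 : ∀ᶠ k in atTop, (3*M) * ‖z k - q‖ < ε/2 := by
      have := hzq0.const_mul (3*M)
      rw [mul_zero] at this
      exact this.eventually (eventually_lt_nhds (by linarith))
    obtain ⟨k, hk⟩ := hk1.exists
    have hn1 : ∀ᶠ n in atTop, 2*M*‖T (x n) - x n‖ < (ε/2) * (1 - t k) := by
      have h1 := hεT.const_mul (2*M)
      rw [mul_zero] at h1
      exact h1.eventually (eventually_lt_nhds (mul_pos (by linarith) (ht1k k)))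
    filter_upwards [hn1] with n hn
    have hterm1 : ‖q‖^2 - ‖z k‖^2 ≤ (2*M) * ‖z k - q‖ := by
      have e1 : ‖q‖ - ‖z k‖ ≤ ‖z k - q‖ := by
        have := abs_norm_sub_norm_le q (z k)
        rw [norm_sub_rev q (z k)] at this
        linarith [le_abs_self (‖q‖ - ‖z k‖)]
      nlinarith [hqM, hzM k, norm_nonneg (z k - q), norm_nonneg q, norm_nonneg (z k)]
    have hterm3 : ⟪z k - q, x n⟫ ≤ ‖z k - q‖ * M := by
      have e1 := real_inner_le_norm (z k - q) (x n)
      nlinarith [hxM n, norm_nonneg (z k - q)]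
    have hsplit : ‖q‖^2 - ⟪x n, q⟫ = (‖q‖^2 - ‖z k‖^2) + (‖z k‖^2 - ⟪z k, x n⟫)
        + ⟪z k - q, x n⟫ := by
      rw [inner_sub_left, real_inner_comm q (x n)]
      ring
    have hk2 := hkey k n
    have hW : ‖z k‖^2 - ⟪z k, x n⟫ < ε/2 := by
      have h5 : (‖z k‖^2 - ⟪z k, x n⟫) * (1 - t k) < (ε/2) * (1 - t k) :=
        lt_of_le_of_lt hk2 hn
      exact lt_of_mul_lt_mul_right h5 (ht1k k).le
    rw [hsplit]
    have hsum : ‖q‖^2 - ‖z k‖^2 + (‖z k‖^2 - ⟪z k, x n⟫) + ⟪z k - q, x n⟫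
        ≤ 2*M*‖z k - q‖ + ε/2 + ‖z k - q‖*M :=
      add_le_add (add_le_add hterm1 hW.le) hterm3
    have hfin : 2*M*‖z k - q‖ + ε/2 + ‖z k - q‖*M ≤ ε := by linarith only [hk]
    exact le_trans hsum hfin
  -- final convergence
  set s : ℕ → ℝ := fun n => ‖x n - q‖^2 with hs
  set δ : ℕ → ℝ := fun n => 2*(β n)*(‖q‖^2 - ⟪x n, q⟫) + (1 - β n)*‖q‖^2 with hδ
  have hsrec : ∀ n, s (n+1) ≤ β n * s n + (1 - β n) * δ n := by
    intro n
    have h1 : ‖x (n+1) - q‖ ≤ ‖β n • x n - q‖ := hxs n q hqfix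
    have h1' : s (n+1) ≤ ‖β n • x n - q‖^2 := by
      have := pow_le_pow_left₀ (norm_nonneg _) h1 2
      exact this
    have hid : β n • x n - q = β n • (x n - q) - (1 - β n) • q := by module
    have hnq : ‖β n • (x n - q) - (1 - β n) • q‖^2
        = (β n)^2*‖x n - q‖^2 - 2*((β n)*(1-β n))*⟪x n - q, q⟫ + (1-β n)^2*‖q‖^2 := by
      rw [norm_sub_sq_real, norm_smul, norm_smul, real_inner_smul_left, real_inner_smul_right,
        Real.norm_eq_abs, Real.norm_eq_abs, abs_of_pos (hβ n).1,
        abs_of_nonneg (by linarith [(hβ n).2] : (0:ℝ) ≤ 1 - β n)]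
      ring
    have hip : ⟪x n - q, q⟫ = ⟪x n, q⟫ - ‖q‖^2 := by
      rw [inner_sub_left, real_inner_self_eq_norm_sq]
    rw [hid, hnq, hip] at h1'
    have hsn : (0:ℝ) ≤ s n := sq_nonneg _
    calc s (n+1) ≤ (β n)^2*‖x n - q‖^2 - 2*((β n)*(1-β n))*(⟪x n, q⟫ - ‖q‖^2)
          + (1-β n)^2*‖q‖^2 := h1'
      _ ≤ β n * s n + (1 - β n) * δ n := by
          simp only [hs, hδ]
          nlinarith [mul_nonneg (mul_nonneg (hβ n).1.le
            (by linarith [(hβ n).2] : (0:ℝ) ≤ 1 - β n)) (sq_nonneg ‖x n - q‖)]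
  have hδε : ∀ ε : ℝ, 0 < ε → ∀ᶠ n in atTop, δ n ≤ ε := by
    intro ε hε
    have h2 : Tendsto (fun n => (1 - β n)*‖q‖^2) atTop (nhds 0) := by
      have := (tendsto_const_nhds (x := (1:ℝ)).sub hβ1).mul_const (‖q‖^2)
      simpa using this
    filter_upwards [hG (ε/4) (by linarith), h2.eventually (eventually_le_nhds (show (0:ℝ) < ε/2 by linarith))]
      with n hw ht2
    have hb1 := (hβ n).1
    have hb2 := (hβ n).2
    simp only [hδ]
    nlinarith [mul_nonneg hb1.le (by linarith : (0:ℝ) ≤ ε/4 - (‖q‖^2 - ⟪x n, q⟫)),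
      mul_nonneg (by linarith : (0:ℝ) ≤ 1 - β n) hε.le]
  have hstend : Tendsto s atTop (nhds 0) :=
    tkm_xu_limsup s β δ (fun n => ⟨(hβ n).1, (hβ n).2⟩) (fun n => sq_nonneg _) hδε hβdiv hsrec
  have hnormtend : Tendsto (fun n => ‖x n - q‖) atTop (nhds 0) := by
    have h1 : Tendsto (fun n => Real.sqrt (s n)) atTop (nhds 0) := by
      have := (Real.continuous_sqrt.tendsto 0).comp hstend
      rw [Real.sqrt_zero] at this; exact this
    apply h1.congr
    intro n
    simp only [hs]
    exact Real.sqrt_sq (norm_nonneg _)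
  exact ⟨q, hqfix, hqmin, tendsto_iff_norm_sub_tendsto_zero.mpr hnormtend⟩
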